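/- For every (w,r,q) ∈ ℂⁿ × (0,∞) × ℝ the map Ψ is Fréchet differentiable at (w,r,q), and its derivative DΨ_{(w,r,q)} satisfies, for all u ∈ ℂⁿ and ρ, σ ∈ ℝ: θ_{Ψ(w,r,q)}( DΨ_{(w,r,q)}(u,ρ,σ) ) = √(r⁴+q²)·θ_w(u) + q·θ̄_w(u), and θ̄_{Ψ(w,r,q)}( DΨ_{(w,r,q)}(u,ρ,σ) ) = √(r⁴+q²)·θ̄_w(u) + q·θ_w(u). (These are the pointwise forms of the pullback identities Ψ*θ = √(r⁴+q²)·Ξ + q·Ξ̄ and Ψ*θ̄ = √(r⁴+q²)·Ξ̄ + q·Ξ on 𝕊 × (0,∞) × ℝ.) -/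

import Mathlib

open Finset

/-- `α⁺_w(v) = Σ_{i : k i > 0} (Re w_i · Im v_i − Im w_i · Re v_i)`. -/
noncomputable def angularPos (n : ℕ) (k : Fin n → ℤ) (w v : Fin n → ℂ) : ℝ :=
  ∑ i ∈ univ.filter (fun i => 0 < k i), ((w i).re * (v i).im - (w i).im * (v i).re)

/-- `α⁻_w(v) = Σ_{i : k i < 0} (Re w_i · Im v_i − Im w_i · Re v_i)`. -/
noncomputable def angularNeg (n : ℕ) (k : Fin n → ℤ) (w v : Fin n → ℂ) : ℝ :=
  ∑ i ∈ univ.filter (fun i => k i < 0), ((w i).re * (v i).im - (w i).im * (v i).re)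

/-- `θ := (α⁺ − α⁻)/2`. -/
noncomputable def thetaForm (n : ℕ) (k : Fin n → ℤ) (w v : Fin n → ℂ) : ℝ :=
  (angularPos n k w v - angularNeg n k w v) / 2

/-- `θ̄ := (α⁺ + α⁻)/2`. -/
noncomputable def thetaBarForm (n : ℕ) (k : Fin n → ℤ) (w v : Fin n → ℂ) : ℝ :=
  (angularPos n k w v + angularNeg n k w v) / 2

/-- `g⁺(r,q) := √(√(r⁴+q²) + q)`. -/
noncomputable def gPlus (r q : ℝ) : ℝ := Real.sqrt (Real.sqrt (r ^ 4 + q ^ 2) + q)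

/-- `g⁻(r,q) := √(√(r⁴+q²) − q)`. -/
noncomputable def gMinus (r q : ℝ) : ℝ := Real.sqrt (Real.sqrt (r ^ 4 + q ^ 2) - q)

/-- The bi-spherical coordinate map `Ψ(w,r,q)_i = g⁺(r,q)·w_i` for `k i > 0` and
`Ψ(w,r,q)_i = g⁻(r,q)·w_i` for `k i < 0`. -/
noncomputable def PsiMap (n : ℕ) (k : Fin n → ℤ) (p : (Fin n → ℂ) × ℝ × ℝ) : Fin n → ℂ :=
  fun i => if 0 < k i then (gPlus p.2.1 p.2.2 : ℂ) * p.1 i else (gMinus p.2.1 p.2.2 : ℂ) * p.1 i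

/-- pointwise form of the pullback identities
`Ψ*θ = √(r⁴+q²)·Ξ + q·Ξ̄` and `Ψ*θ̄ = √(r⁴+q²)·Ξ̄ + q·Ξ`. -/
theorem bispherical_pullback_theta
    (n : ℕ) (hn : 1 ≤ n) (k : Fin n → ℤ) (hk : ∀ i, k i ≠ 0)
    (hP : ∃ i, 0 < k i) (hN : ∃ i, k i < 0)
    (w : Fin n → ℂ) (r q : ℝ) (hr : 0 < r) :
    DifferentiableAt ℝ (PsiMap n k) (w, r, q) ∧
    ∀ (u : Fin n → ℂ) (ρ σ : ℝ),
      thetaForm n k (PsiMap n k (w, r, q))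
          (fderiv ℝ (PsiMap n k) (w, r, q) (u, ρ, σ))
        = Real.sqrt (r ^ 4 + q ^ 2) * thetaForm n k w u + q * thetaBarForm n k w u ∧
      thetaBarForm n k (PsiMap n k (w, r, q))
          (fderiv ℝ (PsiMap n k) (w, r, q) (u, ρ, σ))
        = Real.sqrt (r ^ 4 + q ^ 2) * thetaBarForm n k w u + q * thetaForm n k w u := by
  classical
  set E := (Fin n → ℂ) × ℝ × ℝ
  set x : E := (w, r, q) with hx
  have hpos : (0:ℝ) < r ^ 4 + q ^ 2 := by positivity
  have hsq : |q| < Real.sqrt (r ^ 4 + q ^ 2) := by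
    rw [← Real.sqrt_sq_eq_abs]
    exact Real.sqrt_lt_sqrt (sq_nonneg q) (by nlinarith [pow_pos hr 4])
  have habs := abs_lt.1 hsq
  have hplus : (0:ℝ) < Real.sqrt (r ^ 4 + q ^ 2) + q := by linarith [habs.1]
  have hminus : (0:ℝ) < Real.sqrt (r ^ 4 + q ^ 2) - q := by linarith [habs.2]
  -- differentiability of the scalar coefficients
  have h1 : DifferentiableAt ℝ (fun p : E => p.2.1 ^ 4 + p.2.2 ^ 2) x := by fun_prop
  have h2 : DifferentiableAt ℝ (fun p : E => Real.sqrt (p.2.1 ^ 4 + p.2.2 ^ 2)) x :=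
    h1.sqrt hpos.ne'
  have hcp : DifferentiableAt ℝ (fun p : E => gPlus p.2.1 p.2.2) x := by
    unfold gPlus
    exact (h2.add (by fun_prop)).sqrt hplus.ne'
  have hcm : DifferentiableAt ℝ (fun p : E => gMinus p.2.1 p.2.2) x := by
    unfold gMinus
    exact (h2.sub (by fun_prop)).sqrt hminus.ne'
  set Dp : E →L[ℝ] ℝ := fderiv ℝ (fun p : E => gPlus p.2.1 p.2.2) x with hDp
  set Dm : E →L[ℝ] ℝ := fderiv ℝ (fun p : E => gMinus p.2.1 p.2.2) x with hDm
  have hGp : HasFDerivAt (fun p : E => ((gPlus p.2.1 p.2.2 : ℝ) : ℂ))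
      (Complex.ofRealCLM.comp Dp) x :=
    Complex.ofRealCLM.hasFDerivAt.comp x hcp.hasFDerivAt
  have hGm : HasFDerivAt (fun p : E => ((gMinus p.2.1 p.2.2 : ℝ) : ℂ))
      (Complex.ofRealCLM.comp Dm) x :=
    Complex.ofRealCLM.hasFDerivAt.comp x hcm.hasFDerivAt
  have hproj : ∀ i, HasFDerivAt (fun p : E => p.1 i)
      ((ContinuousLinearMap.proj i).comp (ContinuousLinearMap.fst ℝ (Fin n → ℂ) (ℝ × ℝ))) x :=
    fun i => (hasFDerivAt_apply (𝕜 := ℝ) i x.1).comp x (hasFDerivAt_fst (p := x))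
  set D : ∀ _ : Fin n, E →L[ℝ] ℂ := fun i =>
    if 0 < k i then
      ((gPlus r q : ℂ) •
          ((ContinuousLinearMap.proj i).comp (ContinuousLinearMap.fst ℝ (Fin n → ℂ) (ℝ × ℝ)))
        + (w i) • (Complex.ofRealCLM.comp Dp))
    else
      ((gMinus r q : ℂ) •
          ((ContinuousLinearMap.proj i).comp (ContinuousLinearMap.fst ℝ (Fin n → ℂ) (ℝ × ℝ)))
        + (w i) • (Complex.ofRealCLM.comp Dm)) with hD
  have hPsi : HasFDerivAt (PsiMap n k) (ContinuousLinearMap.pi D) x := by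
    apply hasFDerivAt_pi.2
    intro i
    by_cases h : 0 < k i
    · simp only [hD, PsiMap, if_pos h]
      exact hGp.mul (hproj i)
    · simp only [hD, PsiMap, if_neg h]
      exact hGm.mul (hproj i)
  refine ⟨hPsi.differentiableAt, fun u ρ σ => ?_⟩
  have hfd : fderiv ℝ (PsiMap n k) x = ContinuousLinearMap.pi D := hPsi.fderiv
  set v : Fin n → ℂ := fderiv ℝ (PsiMap n k) (w, r, q) (u, ρ, σ) with hv
  have hvDef : ∀ i, v i = D i (u, ρ, σ) := by
    intro i
    rw [hv, ← hx, hfd, ContinuousLinearMap.pi_apply]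
  set tp : ℝ := Dp (u, ρ, σ) with htp
  set tm : ℝ := Dm (u, ρ, σ) with htm
  have hvpos : ∀ i, 0 < k i → v i = (gPlus r q : ℂ) * u i + (w i) * (tp : ℂ) := by
    intro i h
    rw [hvDef i]
    simp [hD, if_pos h, smul_eq_mul]
    rfl
  have hvneg : ∀ i, ¬ 0 < k i → v i = (gMinus r q : ℂ) * u i + (w i) * (tm : ℂ) := by
    intro i h
    rw [hvDef i]
    simp [hD, if_neg h, smul_eq_mul]
    rfl
  have hPsipos : ∀ i, 0 < k i → PsiMap n k (w, r, q) i = (gPlus r q : ℂ) * w i := by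
    intro i h; simp [PsiMap, if_pos h]
  have hPsineg : ∀ i, ¬ 0 < k i → PsiMap n k (w, r, q) i = (gMinus r q : ℂ) * w i := by
    intro i h; simp [PsiMap, if_neg h]
  have hgp2 : gPlus r q ^ 2 = Real.sqrt (r ^ 4 + q ^ 2) + q := Real.sq_sqrt hplus.le
  have hgm2 : gMinus r q ^ 2 = Real.sqrt (r ^ 4 + q ^ 2) - q := Real.sq_sqrt hminus.le
  have hA : angularPos n k (PsiMap n k (w, r, q)) v = gPlus r q ^ 2 * angularPos n k w u := by
    unfold angularPos
    rw [Finset.mul_sum]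
    refine Finset.sum_congr rfl fun i hi => ?_
    have hki : 0 < k i := (Finset.mem_filter.1 hi).2
    rw [hPsipos i hki, hvpos i hki]
    simp only [Complex.add_re, Complex.add_im, Complex.mul_re, Complex.mul_im,
      Complex.ofReal_re, Complex.ofReal_im]
    ring
  have hB : angularNeg n k (PsiMap n k (w, r, q)) v = gMinus r q ^ 2 * angularNeg n k w u := by
    unfold angularNeg
    rw [Finset.mul_sum]
    refine Finset.sum_congr rfl fun i hi => ?_
    have hki : k i < 0 := (Finset.mem_filter.1 hi).2
    have hki' : ¬ 0 < k i := by omega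
    rw [hPsineg i hki', hvneg i hki']
    simp only [Complex.add_re, Complex.add_im, Complex.mul_re, Complex.mul_im,
      Complex.ofReal_re, Complex.ofReal_im]
    ring
  constructor
  · unfold thetaForm thetaBarForm
    rw [hA, hB, hgp2, hgm2]
    unfold angularPos angularNeg
    ring
  · unfold thetaForm thetaBarForm
    rw [hA, hB, hgp2, hgm2]
    unfold angularPos angularNeg
    ring
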